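/- Let F be a skew-symmetric endomorphism of a real vector space V with nondegenerate symmetric bilinear form g of Lorentzian signature (1,q) or (p,1). If F ∘ F = 0, then F = 0. -/

import Mathlib

/-- Auxiliary lemma: the case p = 1. -/
theorem skew_sq_zero_aux
    (q : ℕ) (V : Type*) [AddCommGroup V] [Module ℝ V]
    (B : V →ₗ[ℝ] V →ₗ[ℝ] ℝ)
    (b : Module.Basis (Fin 1 ⊕ Fin q) ℝ V)
    (hb : ∀ i j, B (b i) (b j) =
      if i = j then Sum.elim (fun _ => (-1 : ℝ)) (fun _ => (1 : ℝ)) i else 0)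
    (F : V →ₗ[ℝ] V)
    (hskew : ∀ u v : V, B (F u) v = - B u (F v))
    (hFF : F ∘ₗ F = 0) :
    F = 0 := by
  have hsymm : ∀ u v, B u v = B v u := by
    have h : B = B.flip := by
      apply LinearMap.ext_basis b b
      intro i j
      simp only [LinearMap.flip_apply, hb]
      rcases eq_or_ne i j with rfl | h
      · simp
      · simp [h, Ne.symm h]
    intro u v
    conv_lhs => rw [h]
    simp [LinearMap.flip_apply]
  have hF2 : ∀ u, F (F u) = 0 := by
    intro u
    have := LinearMap.ext_iff.mp hFF u
    simpa using this
  have hnull : ∀ u, B (F u) (F u) = 0 := by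
    intro u
    rw [hskew, hF2]
    simp
  have horth : ∀ u, B (F u) u = 0 := by
    intro u
    have h1 := hskew u u
    have h2 := hsymm u (F u)
    linarith
  have hcoord : ∀ (x : V) (j), B x (b j) =
      b.repr x j * Sum.elim (fun _ => (-1 : ℝ)) (fun _ => (1 : ℝ)) j := by
    intro x j
    conv_lhs => rw [← b.sum_repr x]
    simp only [map_sum, map_smul, LinearMap.sum_apply, LinearMap.smul_apply, hb,
      smul_eq_mul]
    rw [Finset.sum_eq_single j]
    · simp
    · intro i _ hij; simp [hij]
    · intro h; simp at h
  have hkey : ∀ x : V, B x x = 0 → B x (b (Sum.inl 0)) = 0 → x = 0 := by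
    intro x hx he
    rw [hcoord] at he
    have hc0 : b.repr x (Sum.inl 0) = 0 := by
      simpa using he
    have hxx : B x x = ∑ j, b.repr x j *
        (b.repr x j * Sum.elim (fun _ => (-1 : ℝ)) (fun _ => (1 : ℝ)) j) := by
      calc B x x = B x (∑ j, b.repr x j • b j) := by rw [b.sum_repr]
        _ = ∑ j, b.repr x j * B x (b j) := by
            rw [map_sum]; simp [smul_eq_mul]
        _ = _ := Finset.sum_congr rfl fun j _ => by rw [hcoord]
    rw [hx, Fintype.sum_sum_type] at hxx
    have hinl : ∀ i : Fin 1, b.repr x (Sum.inl i) = 0 := by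
      intro i; fin_cases i; exact hc0
    simp only [hinl, Sum.elim_inl, Sum.elim_inr, zero_mul, Finset.sum_const_zero,
      mul_one, zero_add] at hxx
    have hall : ∀ j : Fin q, b.repr x (Sum.inr j) = 0 := by
      intro j
      have h := (Finset.sum_eq_zero_iff_of_nonneg
        (fun j _ => mul_self_nonneg (b.repr x (Sum.inr j)))).mp hxx.symm j (Finset.mem_univ j)
      exact mul_self_eq_zero.mp h
    have : ∀ i, b.repr x i = 0 := by
      rintro (i | j)
      · exact hinl i
      · exact hall j
    have hrepr : b.repr x = 0 := Finsupp.ext this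
    exact b.repr.map_eq_zero_iff.mp hrepr
  have he : F (b (Sum.inl 0)) = 0 := hkey _ (hnull _) (horth _)
  ext u
  refine hkey (F u) (hnull u) ?_
  rw [hskew, he]
  simp

/-- Lemma B.4 (i): in Lorentzian signature (p = 1 or q = 1), a skew-symmetric
endomorphism F with F ∘ F = 0 vanishes. -/
theorem skew_sq_zero_lorentzian
    (p q : ℕ) (V : Type*) [AddCommGroup V] [Module ℝ V]
    (B : V →ₗ[ℝ] V →ₗ[ℝ] ℝ)
    (b : Module.Basis (Fin p ⊕ Fin q) ℝ V)
    (hb : ∀ i j, B (b i) (b j) =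
      if i = j then Sum.elim (fun _ => (-1 : ℝ)) (fun _ => (1 : ℝ)) i else 0)
    (hLor : p = 1 ∨ q = 1)
    (F : V →ₗ[ℝ] V)
    (hskew : ∀ u v : V, B (F u) v = - B u (F v))
    (hFF : F ∘ₗ F = 0) :
    F = 0 := by
  rcases hLor with rfl | rfl
  · exact skew_sq_zero_aux q V B b hb F hskew hFF
  · -- q = 1 : apply the aux lemma to -B and the swapped basis
    refine skew_sq_zero_aux p V (-B) (b.reindex (Equiv.sumComm (Fin p) (Fin 1))) ?_ F ?_ hFF
    · rintro i j
      simp only [Module.Basis.reindex_apply, Equiv.sumComm_symm, Equiv.sumComm_apply,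
        LinearMap.neg_apply]
      rw [hb]
      rcases eq_or_ne i j with rfl | h
      · rcases i with i | i <;> simp
      · have : Sum.swap i ≠ Sum.swap j := fun hc => h (by simpa using congrArg Sum.swap hc)
        simp [h, this]
    · intro u v
      simp only [LinearMap.neg_apply]
      rw [hskew]
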